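/- For every positive integer n, a Binomial(n,p) random variable with np = λ satisfies F(k-1; n, p) ≤ e^{-λ} Σ_{i=0}^{k-1} λ^i/i!, i.e., the binomial lower-tail CDF at k-1 is at most the Poisson(λ) lower-tail CDF at k-1, whenever k ≤ λ. -/

import Mathlib

open Finset Filter Topology


noncomputable def Bt (N i : ℕ) (r : ℝ) : ℝ := (N.choose i : ℝ) * r ^ i * (1 - r) ^ (N - i)

noncomputable def Wt (N k : ℕ) (r : ℝ) : ℝ := ∑ i ∈ Finset.range k, Bt N i r

lemma hasDerivAt_Bt_zero (N : ℕ) (r : ℝ) :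
    HasDerivAt (fun x => Bt N 0 x) (-(N : ℝ) * Bt (N - 1) 0 r) r := by
  have h1 : HasDerivAt (fun x : ℝ => 1 - x) (-1) r := by
    simpa using (hasDerivAt_id r).const_sub (1:ℝ)
  have h2 : HasDerivAt (fun x : ℝ => (1 - x) ^ N)
      ((N : ℝ) * (1 - r) ^ (N - 1) * (-1)) r := (hasDerivAt_pow N _).comp r h1
  have h3 : HasDerivAt (fun x => Bt N 0 x) ((N : ℝ) * (1 - r) ^ (N - 1) * (-1)) r := by
    refine h2.congr_deriv rfl |>.congr_of_eventuallyEq ?_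
    filter_upwards with x; simp [Bt]
  refine h3.congr_deriv ?_
  simp [Bt]

lemma hasDerivAt_Bt_succ (N a : ℕ) (ha : a + 1 ≤ N) (r : ℝ) :
    HasDerivAt (fun x => Bt N (a+1) x)
      ((N : ℝ) * (Bt (N-1) a r - Bt (N-1) (a+1) r)) r := by
  have h1 : HasDerivAt (fun x : ℝ => x ^ (a+1)) (((a:ℝ)+1) * r ^ a) r := by
    simpa using hasDerivAt_pow (a+1) r
  have hm : HasDerivAt (fun x : ℝ => 1 - x) (-1) r := by
    simpa using (hasDerivAt_id r).const_sub (1:ℝ)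
  have h2 : HasDerivAt (fun x : ℝ => (1 - x) ^ (N - (a+1)))
      (((N - (a+1) : ℕ) : ℝ) * (1 - r) ^ (N - (a+1) - 1) * (-1)) r :=
    (hasDerivAt_pow (N - (a+1)) _).comp r hm
  have h3 : HasDerivAt (fun x => Bt N (a+1) x)
      ((N.choose (a+1) : ℝ) * (((a:ℝ)+1) * r ^ a * (1 - r) ^ (N - (a+1))
        + r ^ (a+1) * (((N - (a+1) : ℕ) : ℝ) * (1 - r) ^ (N - (a+1) - 1) * (-1)))) r := by
    have := ((h1.mul h2).const_mul (N.choose (a+1) : ℝ))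
    refine this.congr_deriv ?_ |>.congr_of_eventuallyEq ?_
    · ring
    · filter_upwards with x; simp [Bt, mul_assoc]
  refine h3.congr_deriv ?_
  have hN : N - 1 + 1 = N := by omega
  have e1nat : N * (N-1).choose a = N.choose (a+1) * (a+1) := by
    have h := Nat.add_one_mul_choose_eq (N-1) a
    simp only [Nat.succ_eq_add_one, hN] at h
    exact h
  have e2nat : N * (N-1).choose (a+1) = N.choose (a+1) * (N - (a+1)) := by
    have h2' := Nat.add_one_mul_choose_eq (N-1) (a+1)
    simp only [Nat.succ_eq_add_one, hN] at h2'
    exact h2'.trans (Nat.choose_succ_right_eq N (a+1))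
  have e1 : (N.choose (a+1) : ℝ) * ((a:ℝ)+1) = (N : ℝ) * ((N-1).choose a : ℝ) := by
    exact_mod_cast (congrArg (Nat.cast (R := ℝ)) e1nat).symm
  have e2 : (N.choose (a+1) : ℝ) * ((N - (a+1) : ℕ) : ℝ)
      = (N : ℝ) * ((N-1).choose (a+1) : ℝ) := by
    exact_mod_cast (congrArg (Nat.cast (R := ℝ)) e2nat).symm
  have e3 : N - 1 - a = N - (a+1) := by omega
  have e4 : N - 1 - (a+1) = N - (a+1) - 1 := by omega
  simp only [Bt, e3, e4]
  linear_combination (r ^ a * (1 - r) ^ (N - (a+1))) * e1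
    - (r ^ (a+1) * (1 - r) ^ (N - (a+1) - 1)) * e2

noncomputable def dW (m k : ℕ) (r : ℝ) : ℝ :=
  if k = 0 then 0 else -(m:ℝ) * Bt (m-1) (k-1) r

lemma hasDerivAt_Wt (m k : ℕ) (hkm : k ≤ m) (r : ℝ) :
    HasDerivAt (fun x => Wt m k x) (dW m k r) r := by
  induction k with
  | zero =>
      have : HasDerivAt (fun _ : ℝ => (0:ℝ)) 0 r := hasDerivAt_const r 0
      refine (this.congr_of_eventuallyEq ?_).congr_deriv (by simp [dW])
      filter_upwards with x; simp [Wt]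
  | succ a ih =>
      have ha : a ≤ m := by omega
      have hBd : HasDerivAt (fun x => Bt m a x)
          (dW m (a+1) r - dW m a r) r := by
        cases a with
        | zero =>
            refine (hasDerivAt_Bt_zero m r).congr_deriv ?_
            simp [dW]
        | succ b =>
            refine (hasDerivAt_Bt_succ m b (by omega) r).congr_deriv ?_
            simp only [dW, if_neg (Nat.succ_ne_zero _), if_neg (Nat.succ_ne_zero _)]
            simp only [Nat.add_sub_cancel]
            ring
      have := (ih ha).add hBd
      refine (this.congr_of_eventuallyEq ?_).congr_deriv (by ring)
      filter_upwards with x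
      simp [Wt, Finset.sum_range_succ]

lemma Bt_pascal (m i : ℕ) (hi : i + 1 ≤ m) (r : ℝ) :
    Bt (m+1) (i+1) r = (1 - r) * Bt m (i+1) r + r * Bt m i r := by
  have hc : ((m+1).choose (i+1) : ℝ) = (m.choose (i+1) : ℝ) + (m.choose i : ℝ) := by
    have := Nat.choose_succ_succ m i
    push_cast [this]
    ring
  have e1 : m + 1 - (i+1) = (m - (i+1)) + 1 := by omega
  have e2 : m - i = (m - (i+1)) + 1 := by omega
  simp only [Bt, hc, e1, e2]
  ring

lemma Wt_pascal (m k : ℕ) (hkm : k ≤ m + 1) (r : ℝ) :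
    Wt (m+1) k r = (1 - r) * Wt m k r + r * Wt m (k-1) r := by
  cases k with
  | zero => simp [Wt]
  | succ j =>
      simp only [Nat.add_sub_cancel]
      rw [Wt, Finset.sum_range_succ', Wt, Finset.sum_range_succ']
      have hterm : ∀ i ∈ Finset.range j,
          Bt (m+1) (i+1) r = (1 - r) * Bt m (i+1) r + r * Bt m i r := by
        intro i hi
        exact Bt_pascal m i (by simp at hi; omega) r
      rw [Finset.sum_congr rfl hterm]
      have h0 : Bt (m+1) 0 r = (1 - r) * Bt m 0 r := by
        simp [Bt]; ring
      rw [Finset.sum_add_distrib, h0, Wt]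
      rw [← Finset.mul_sum, ← Finset.mul_sum]
      ring

lemma Bt_mono (M a : ℕ) (ha : a + 1 ≤ M) (r : ℝ) (hr0 : 0 ≤ r) (hr1 : r ≤ 1)
    (hcond : ((a:ℝ)+1) ≤ ((M:ℝ)+1) * r) : Bt M a r ≤ Bt M (a+1) r := by
  have h1r : (0:ℝ) ≤ 1 - r := by linarith
  have hMa : ((M - a : ℕ) : ℝ) = (M:ℝ) - a := by
    push_cast [Nat.cast_sub (by omega : a ≤ M)]; ring
  have hca : (M.choose (a+1) : ℝ) * ((a:ℝ)+1) = (M.choose a : ℝ) * ((M:ℝ) - (a:ℝ)) := by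
    have := congrArg (Nat.cast (R := ℝ)) (Nat.choose_succ_right_eq M a)
    push_cast at this
    rw [hMa] at this
    exact this
  have hCa : (0:ℝ) ≤ (M.choose a : ℝ) := Nat.cast_nonneg _
  have key : (M.choose a : ℝ) * (1 - r) ≤ (M.choose (a+1) : ℝ) * r := by
    have h1 : ((a:ℝ)+1) * ((M.choose a : ℝ) * (1 - r))
        ≤ ((a:ℝ)+1) * ((M.choose (a+1) : ℝ) * r) := by
      have hineq : ((a:ℝ)+1) * (1 - r) ≤ ((M:ℝ) - a) * r := by nlinarith
      calc ((a:ℝ)+1) * ((M.choose a : ℝ) * (1 - r))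
          = (M.choose a : ℝ) * (((a:ℝ)+1) * (1 - r)) := by ring
        _ ≤ (M.choose a : ℝ) * (((M:ℝ) - a) * r) :=
            mul_le_mul_of_nonneg_left hineq hCa
        _ = ((a:ℝ)+1) * ((M.choose (a+1) : ℝ) * r) := by
            rw [show (M.choose a : ℝ) * (((M:ℝ) - (a:ℝ)) * r)
              = ((M.choose a : ℝ) * ((M:ℝ) - (a:ℝ))) * r by ring, ← hca]; ring
    have hpos : (0:ℝ) < (a:ℝ) + 1 := by positivity
    exact le_of_mul_le_mul_left h1 hpos
  have e2 : M - a = (M - (a+1)) + 1 := by omega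
  have h := mul_le_mul_of_nonneg_left key
    (mul_nonneg (pow_nonneg hr0 a) (pow_nonneg h1r (M - (a+1))))
  calc Bt M a r = r ^ a * (1 - r) ^ (M - (a+1)) * ((M.choose a : ℝ) * (1 - r)) := by
        simp only [Bt, e2, pow_succ]; ring
    _ ≤ r ^ a * (1 - r) ^ (M - (a+1)) * ((M.choose (a+1) : ℝ) * r) := h
    _ = Bt M (a+1) r := by simp only [Bt, pow_succ]; ring

lemma Dg_nonneg (m k : ℕ) (q' R S : ℝ) (hk : 1 ≤ k) (hkm : k ≤ m) (hm : 1 ≤ m)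
    (hq'0 : 0 ≤ q') (hR0 : 0 ≤ R) (hR1 : R ≤ 1) (hS0 : 0 ≤ S) (hSR : S ≤ R)
    (hmR : (k:ℝ) - 1 ≤ (m:ℝ) * R) :
    0 ≤ (-q') * Wt m k R + (1 - S) * (dW m k R * (-(q'/(m:ℝ))))
        + (q' * Wt m (k-1) R + S * (dW m (k-1) R * (-(q'/(m:ℝ))))) := by
  have hmne : ((m:ℝ)) ≠ 0 := by
    have : (0:ℝ) < m := by exact_mod_cast hm
    linarith
  have hcanc : ∀ b : ℝ, (-(m:ℝ) * b) * (-(q'/(m:ℝ))) = q' * b := by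
    intro b; field_simp
  have h1R : 0 ≤ 1 - R := by linarith
  rcases k with _ | a
  · omega
  rcases a with _ | a
  · -- k = 1
    have hW0 : Wt m 0 R = 0 := by simp [Wt]
    have hdW0 : dW m 0 R = 0 := by simp [dW]
    have hW1 : Wt m 1 R = (1 - R)^m := by simp [Wt, Bt]
    have hdW1 : dW m 1 R = -(m:ℝ) * ((1 - R)^(m-1)) := by simp [dW, Bt]
    simp only [Nat.add_sub_cancel, Nat.zero_add]
    rw [hW0, hdW0, hW1, hdW1, hcanc]
    have hpow : (1 - R)^m = (1 - R)^(m-1) * (1 - R) := by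
      rw [← pow_succ]; congr 1; omega
    rw [hpow]
    calc (0:ℝ) ≤ q' * (R - S) * (1-R)^(m-1) :=
          mul_nonneg (mul_nonneg hq'0 (sub_nonneg.2 hSR)) (pow_nonneg h1R _)
      _ = (-q') * ((1-R)^(m-1) * (1-R)) + (1 - S) * (q' * (1-R)^(m-1))
          + (q' * 0 + S * (0 * -(q' / (m:ℝ)))) := by ring
  · -- k = a+2
    have hdWk : dW m (a+1+1) R = -(m:ℝ) * Bt (m-1) (a+1) R := by
      simp [dW]
    have hdWk1 : dW m (a+1) R = -(m:ℝ) * Bt (m-1) a R := by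
      simp [dW]
    have hsum : Wt m (a+1+1) R = Wt m (a+1) R + Bt m (a+1) R := by
      simp [Wt, Finset.sum_range_succ]
    have hp : Bt m (a+1) R = (1-R) * Bt (m-1) (a+1) R + R * Bt (m-1) a R := by
      have h := Bt_pascal (m-1) a (by omega) R
      rw [show m - 1 + 1 = m from by omega] at h
      exact h
    have hb : Bt (m-1) a R ≤ Bt (m-1) (a+1) R := by
      apply Bt_mono (m-1) a (by omega) R hR0 hR1
      have hcast : ((m-1:ℕ):ℝ) + 1 = (m:ℝ) := by
        push_cast [Nat.cast_sub hm]; ring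
      rw [hcast]
      push_cast at hmR ⊢
      linarith
    simp only [Nat.add_sub_cancel]
    rw [hdWk, hdWk1, hsum, hp, hcanc, hcanc]
    calc (0:ℝ) ≤ q' * (R - S) * (Bt (m-1) (a+1) R - Bt (m-1) a R) :=
          mul_nonneg (mul_nonneg hq'0 (sub_nonneg.2 hSR)) (sub_nonneg.2 hb)
      _ = (-q') * (Wt m (a+1) R + ((1-R) * Bt (m-1) (a+1) R + R * Bt (m-1) a R))
          + (1 - S) * (q' * Bt (m-1) (a+1) R)
          + (q' * Wt m (a+1) R + S * (q' * Bt (m-1) a R)) := by ring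

lemma step_lemma (m k : ℕ) (lam : ℝ) (hk : 1 ≤ k) (hkl : (k:ℝ) ≤ lam)
    (hlm : lam ≤ (m:ℝ)) :
    Wt m k (lam / m) ≤ Wt (m+1) k (lam / ((m:ℝ)+1)) := by
  have hk0 : (1:ℝ) ≤ (k:ℝ) := by exact_mod_cast hk
  have hm1 : (1:ℝ) ≤ (m:ℝ) := le_trans hk0 (hkl.trans hlm)
  have hmnat : 1 ≤ m := by exact_mod_cast hm1
  have hkm : k ≤ m := by
    have : (k:ℝ) ≤ (m:ℝ) := hkl.trans hlm
    exact_mod_cast this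
  have hm0 : (0:ℝ) < m := by linarith
  have hm10 : (0:ℝ) < (m:ℝ)+1 := by linarith
  have hlam0 : (0:ℝ) < lam := lt_of_lt_of_le (by linarith) hkl
  set q : ℝ := lam / m with hq
  set q' : ℝ := lam / ((m:ℝ)+1) with hq'
  have hq'q : q' ≤ q := by
    rw [hq, hq', div_le_div_iff₀ hm10 hm0]
    nlinarith
  have hq1 : q ≤ 1 := by rw [hq, div_le_one hm0]; exact hlm
  have hq'0 : 0 < q' := div_pos hlam0 hm10
  have hqq' : q' - q = -(q'/(m:ℝ)) := by
    rw [hq, hq']; field_simp; ring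
  set r : ℝ → ℝ := fun t => q + t * (q' - q) with hrdef
  set s : ℝ → ℝ := fun t => t * q' with hsdef
  set g : ℝ → ℝ := fun t => (1 - s t) * Wt m k (r t) + s t * Wt m (k-1) (r t) with hgdef
  set Dg : ℝ → ℝ := fun t => (-q') * Wt m k (r t) + (1 - s t) * (dW m k (r t) * (q' - q))
      + (q' * Wt m (k-1) (r t) + s t * (dW m (k-1) (r t) * (q' - q))) with hDdef
  have hg : ∀ t : ℝ, HasDerivAt g (Dg t) t := by
    intro t
    have hr : HasDerivAt r (q' - q) t := by
      exact (((hasDerivAt_id t).mul_const (q' - q)).const_add q).congr_deriv (one_mul _)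
    have hs : HasDerivAt s q' t := by simpa using (hasDerivAt_id t).mul_const q'
    have h1 : HasDerivAt (fun u => 1 - s u) (-q') t := by
      simpa using hs.const_sub (1:ℝ)
    have hWk : HasDerivAt (fun u => Wt m k (r u)) (dW m k (r t) * (q' - q)) t :=
      (hasDerivAt_Wt m k hkm (r t)).comp t hr
    have hWk1 : HasDerivAt (fun u => Wt m (k-1) (r u)) (dW m (k-1) (r t) * (q' - q)) t :=
      (hasDerivAt_Wt m (k-1) (by omega) (r t)).comp t hr
    exact (h1.mul hWk).add (hs.mul hWk1)
  have hDg : ∀ t ∈ Set.Icc (0:ℝ) 1, 0 ≤ Dg t := by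
    intro t ht
    obtain ⟨ht0, ht1⟩ := ht
    have hRe : r t = q + t * (q' - q) := rfl
    have hSe : s t = t * q' := rfl
    have hRq' : q' ≤ r t := by rw [hRe]; nlinarith
    have hRq : r t ≤ q := by rw [hRe]; nlinarith
    have hR1 : r t ≤ 1 := hRq.trans hq1
    have hR0 : 0 ≤ r t := le_of_lt (lt_of_lt_of_le hq'0 hRq')
    have hS0 : 0 ≤ s t := by rw [hSe]; positivity
    have hSq' : s t ≤ q' := by rw [hSe]; nlinarith
    have hSR : s t ≤ r t := hSq'.trans hRq'
    have hmR : (k:ℝ) - 1 ≤ (m:ℝ) * r t := by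
      have h2 : lam ≤ ((m:ℝ)+1) * r t := by
        have h3 := hRq'
        rw [hq'] at h3
        have h4 := (div_le_iff₀ hm10).1 h3
        linarith [h4]
      nlinarith [h2, hR1, hkl]
    have hkey := Dg_nonneg m k q' (r t) (s t) hk hkm hmnat (le_of_lt hq'0) hR0 hR1 hS0 hSR hmR
    simp only [hDdef]
    rw [hqq']
    exact hkey
  have hdiffall : Differentiable ℝ g := fun t => (hg t).differentiableAt
  have hmono : MonotoneOn g (Set.Icc (0:ℝ) 1) := by
    apply monotoneOn_of_deriv_nonneg (convex_Icc 0 1) hdiffall.continuous.continuousOn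
      hdiffall.differentiableOn
    intro x hx
    rw [(hg x).deriv]
    exact hDg x (interior_subset hx)
  have h01 := hmono (Set.mem_Icc.2 ⟨le_refl 0, zero_le_one⟩)
    (Set.mem_Icc.2 ⟨zero_le_one, le_refl 1⟩) zero_le_one
  have hg0 : g 0 = Wt m k q := by
    simp [hgdef, hrdef, hsdef]
  have hr1 : r 1 = q' := by simp only [hrdef]; ring
  have hs1 : s 1 = q' := by simp only [hsdef]; ring
  have hg1 : g 1 = Wt (m+1) k q' := by
    have hx : g 1 = (1 - q') * Wt m k q' + q' * Wt m (k-1) q' := by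
      simp only [hgdef, hr1, hs1]
    rw [hx, ← Wt_pascal m k (by omega) q']
  rw [hg0, hg1] at h01
  exact h01

lemma Wt_le_of_le (n k : ℕ) (lam : ℝ) (hk : 1 ≤ k) (hkl : (k:ℝ) ≤ lam)
    (hln : lam ≤ (n:ℝ)) :
    ∀ m, n ≤ m → Wt n k (lam / n) ≤ Wt m k (lam / m) := by
  intro m hm
  induction m, hm using Nat.le_induction with
  | base => exact le_refl _
  | succ m hm ih =>
      refine ih.trans ?_
      have hlm : lam ≤ (m:ℝ) := hln.trans (by exact_mod_cast hm)
      have h := step_lemma m k lam hk hkl hlm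
      rw [show ((m+1 : ℕ):ℝ) = (m:ℝ)+1 by push_cast; ring]
      exact h

lemma tendsto_Wt (k : ℕ) (lam : ℝ) (hl : 0 < lam) :
    Tendsto (fun m : ℕ => Wt m k (lam / m)) atTop
      (𝓝 (∑ i ∈ Finset.range k, Real.exp (-lam) * (lam ^ i / (Nat.factorial i : ℝ)))) := by
  simp only [Wt]
  apply tendsto_finset_sum
  intro i _
  have hfane : ((Nat.factorial i : ℕ) : ℝ) ≠ 0 := by
    exact_mod_cast (Nat.factorial_pos i).ne'
  -- coefficient limit
  have hA : Tendsto (fun m : ℕ => (m.choose i : ℝ)/(m:ℝ)^i) atTop (𝓝 (1/(Nat.factorial i : ℝ))) := by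
    have hprod : Tendsto (fun m : ℕ => (1/(Nat.factorial i : ℝ)) * ∏ j ∈ Finset.range i, (1 - (j:ℝ)/(m:ℝ)))
        atTop (𝓝 ((1/(Nat.factorial i : ℝ)) * 1)) := by
      apply Tendsto.const_mul
      have : Tendsto (fun m : ℕ => ∏ j ∈ Finset.range i, (1 - (j:ℝ)/(m:ℝ))) atTop
          (𝓝 (∏ j ∈ Finset.range i, (1:ℝ))) := by
        apply tendsto_finset_prod
        intro j _
        simpa using tendsto_const_nhds.sub (tendsto_const_div_atTop_nhds_zero_nat (j:ℝ))
      simpa using this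
    rw [show (𝓝 (1/(Nat.factorial i : ℝ))) = 𝓝 ((1/(Nat.factorial i : ℝ)) * 1) by rw [mul_one]]
    apply Tendsto.congr' _ hprod
    filter_upwards [eventually_ge_atTop i, eventually_ge_atTop 1] with m hmi hm1
    have hmne : ((m:ℕ):ℝ) ≠ 0 := by
      have : (0:ℝ) < m := by exact_mod_cast hm1
      linarith
    have h1 : (m.descFactorial i : ℝ) = (Nat.factorial i : ℝ) * (m.choose i : ℝ) := by
      exact_mod_cast congrArg (Nat.cast (R := ℝ)) (Nat.descFactorial_eq_factorial_mul_choose m i)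
    have h2 : (m.descFactorial i : ℝ) = ∏ j ∈ Finset.range i, ((m:ℝ) - j) := by
      rw [Nat.descFactorial_eq_prod_range, Nat.cast_prod]
      apply Finset.prod_congr rfl
      intro j hj
      have : j ≤ m := le_trans (le_of_lt (Finset.mem_range.1 hj)) hmi
      push_cast [Nat.cast_sub this]
      ring
    have h3 : ∏ j ∈ Finset.range i, (1 - (j:ℝ)/(m:ℝ)) = (∏ j ∈ Finset.range i, ((m:ℝ) - j))/ (m:ℝ)^i := by
      rw [eq_div_iff (pow_ne_zero _ hmne)]
      have hmc : ((m:ℝ))^i = ∏ _j ∈ Finset.range i, (m:ℝ) := by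
        rw [Finset.prod_const, Finset.card_range]
      rw [hmc, ← Finset.prod_mul_distrib]
      apply Finset.prod_congr rfl
      intro j _
      field_simp
    rw [h3, ← h2, h1]
    field_simp
  have hB : Tendsto (fun m : ℕ => (1 - lam/(m:ℝ))^(m-i)) atTop (𝓝 (Real.exp (-lam))) := by
    have hbase : Tendsto (fun m : ℕ => 1 - lam/(m:ℝ)) atTop (𝓝 1) := by
      simpa using tendsto_const_nhds.sub (tendsto_const_div_atTop_nhds_zero_nat lam)
    have hpow_m : Tendsto (fun m : ℕ => (1 - lam/(m:ℝ))^m) atTop (𝓝 (Real.exp (-lam))) := by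
      have h := Real.tendsto_one_add_div_pow_exp (-lam)
      refine h.congr fun m => ?_
      rw [neg_div, ← sub_eq_add_neg]
    have hpow_i : Tendsto (fun m : ℕ => (1 - lam/(m:ℝ))^i) atTop (𝓝 1) := by
      simpa using hbase.pow i
    have hdiv := hpow_m.div hpow_i one_ne_zero
    rw [show (𝓝 (Real.exp (-lam))) = 𝓝 (Real.exp (-lam) / 1) by rw [div_one]]
    apply Tendsto.congr' _ hdiv
    filter_upwards [eventually_ge_atTop i, eventually_gt_atTop ⌈lam⌉₊] with m hmi hml
    have hmlam : lam < (m:ℝ) := by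
      have h1 : lam ≤ (⌈lam⌉₊ : ℝ) := Nat.le_ceil lam
      have h2 : ((⌈lam⌉₊ : ℕ):ℝ) < (m:ℝ) := by exact_mod_cast hml
      linarith
    have hm0 : (0:ℝ) < m := lt_trans hl hmlam
    have hne : (1 - lam/(m:ℝ)) ≠ 0 := by
      have : lam/(m:ℝ) < 1 := (div_lt_one hm0).2 hmlam
      linarith
    rw [pow_sub₀ _ hne hmi, div_eq_mul_inv]
    rfl
  have hcomb := (hA.mul (tendsto_const_nhds (x := lam ^ i))).mul hB
  rw [show (𝓝 (Real.exp (-lam) * (lam ^ i / (Nat.factorial i : ℝ))))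
      = 𝓝 ((1/(Nat.factorial i : ℝ) * lam ^ i) * Real.exp (-lam)) by ring_nf]
  apply Tendsto.congr' _ hcomb
  filter_upwards [eventually_ge_atTop 1] with m hm1
  have hmne : ((m:ℕ):ℝ) ≠ 0 := by
    have : (0:ℝ) < m := by exact_mod_cast hm1
    linarith
  simp only [Bt]
  rw [div_pow]
  field_simp

theorem binomial_tail_le_poisson_tail
    (n : ℕ) (hn : 0 < n) (p : ℝ) (hp : p ∈ Set.Icc (0:ℝ) 1)
    (k : ℕ) (hk : 0 < k) (hkl : (k : ℝ) ≤ n * p) :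
    ∑ i ∈ Finset.range k, (n.choose i : ℝ) * p ^ i * (1 - p) ^ (n - i) ≤
      Real.exp (-(n * p)) * ∑ i ∈ Finset.range k, (n * p) ^ i / (Nat.factorial i) := by
  obtain ⟨hp0, hp1⟩ := hp
  have hk1 : 1 ≤ k := hk
  have hl0 : (0:ℝ) < (n:ℝ) * p := by
    have : (0:ℝ) < (k:ℝ) := by exact_mod_cast hk
    linarith
  have hnpos : (0:ℝ) < (n:ℝ) := by exact_mod_cast hn
  have hln : (n:ℝ) * p ≤ (n:ℝ) := by nlinarith
  have hplam : p = ((n:ℝ) * p) / (n:ℝ) := by field_simp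
  have hLHS : (∑ i ∈ Finset.range k, (n.choose i : ℝ) * p ^ i * (1 - p) ^ (n - i))
      = Wt n k p := rfl
  have hRHS : Real.exp (-((n:ℝ) * p)) * ∑ i ∈ Finset.range k, ((n:ℝ) * p) ^ i / (Nat.factorial i : ℝ)
      = ∑ i ∈ Finset.range k, Real.exp (-((n:ℝ) * p)) * (((n:ℝ) * p) ^ i / (Nat.factorial i : ℝ)) := by
    rw [Finset.mul_sum]
  rw [hLHS, hRHS]
  have hmain : ∀ m, n ≤ m → Wt n k p ≤ Wt m k (((n:ℝ)*p) / m) := by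
    intro m hm
    have := Wt_le_of_le n k ((n:ℝ)*p) hk1 hkl hln m hm
    rwa [← hplam] at this
  exact ge_of_tendsto (tendsto_Wt k ((n:ℝ)*p) hl0) (eventually_atTop.2 ⟨n, hmain⟩)
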